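/- R(B³K₃, B³C₃) = 5, and for every m ≥ 4, R(B³K_m, B³C₃) = m + 1. -/

import Mathlib

def BergeCycle (N n : ℕ) (E : Finset (Fin N) → Prop) : Prop :=
  ∃ v : ZMod n → Fin N, Function.Injective v ∧
    ∃ h : ZMod n → Finset (Fin N), Function.Injective h ∧
      ∀ i : ZMod n, E (h i) ∧ v i ∈ h i ∧ v (i + 1) ∈ h i

def BergeK (N m : ℕ) (E : Finset (Fin N) → Prop) : Prop :=
  ∃ v : Fin m → Fin N, Function.Injective v ∧
    ∃ h : Fin m → Fin m → Finset (Fin N),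
      (∀ i j : Fin m, i < j → E (h i j) ∧ v i ∈ h i j ∧ v j ∈ h i j) ∧
      (∀ i j i' j' : Fin m, i < j → i' < j' → h i j = h i' j' → i = i' ∧ j = j')

section Helpers
variable {α : Type*} [DecidableEq α]

lemma card_triple {x y z : α} (hxy : x ≠ y) (hxz : x ≠ z) (hyz : y ≠ z) :
    ({x, y, z} : Finset α).card = 3 := by
  rw [Finset.card_insert_of_notMem (by simp [hxy, hxz]),
      Finset.card_insert_of_notMem (by simp [hyz]), Finset.card_singleton]

lemma triple_structure {T : Finset α} (h3 : T.card = 3) {x y : α}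
    (hx : x ∈ T) (hy : y ∈ T) (hxy : x ≠ y) :
    ∃ z, z ≠ x ∧ z ≠ y ∧ T = {x, y, z} := by
  have hsub : ({x, y} : Finset α) ⊆ T := by
    intro a ha; simp at ha; rcases ha with rfl | rfl <;> assumption
  have hc2 : ({x, y} : Finset α).card = 2 := Finset.card_pair hxy
  have hcd : (T \ {x, y}).card = 1 := by
    rw [Finset.card_sdiff_of_subset hsub, hc2, h3]
  obtain ⟨z, hz⟩ := Finset.card_eq_one.mp hcd
  have hzmem : z ∈ T \ ({x, y} : Finset α) := hz ▸ Finset.mem_singleton_self z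
  rw [Finset.mem_sdiff, Finset.mem_insert, Finset.mem_singleton] at hzmem
  refine ⟨z, fun h => hzmem.2 (Or.inl h), fun h => hzmem.2 (Or.inr h), ?_⟩
  have := Finset.union_sdiff_of_subset hsub
  rw [hz] at this
  rw [← this]
  ext a; simp [or_assoc]

lemma pair_eq {x y x' y' : α} (hxy : x ≠ y)
    (h : ({x, y} : Finset α) = {x', y'}) :
    (x = x' ∧ y = y') ∨ (x = y' ∧ y = x') := by
  have hx : x ∈ ({x', y'} : Finset α) := h ▸ (by simp)
  have hy : y ∈ ({x', y'} : Finset α) := h ▸ (by simp)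
  have hx' : x' ∈ ({x, y} : Finset α) := h ▸ (by simp)
  have hy' : y' ∈ ({x, y} : Finset α) := h ▸ (by simp)
  simp at hx hy hx' hy'
  rcases hx with rfl | rfl
  · left; refine ⟨rfl, ?_⟩; rcases hy with rfl | rfl; · exact absurd rfl hxy
    · rfl
  · right; refine ⟨rfl, ?_⟩; rcases hy with rfl | rfl; · rfl
    · exact absurd rfl hxy

end Helpers

lemma mkTriangle {N : ℕ} (E : Finset (Fin N) → Prop) {x y z : Fin N}
    (hxy : x ≠ y) (hyz : y ≠ z) (hxz : x ≠ z)
    {e1 e2 e3 : Finset (Fin N)}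
    (h12 : e1 ≠ e2) (h13 : e1 ≠ e3) (h23 : e2 ≠ e3)
    (hE1 : E e1) (hE2 : E e2) (hE3 : E e3)
    (m1x : x ∈ e1) (m1y : y ∈ e1) (m2y : y ∈ e2) (m2z : z ∈ e2)
    (m3z : z ∈ e3) (m3x : x ∈ e3) : BergeCycle N 3 E := by
  have key : ∀ a : ZMod 3, a = 0 ∨ a = 1 ∨ a = 2 := by decide
  have n01 : (0 : ZMod 3) ≠ 1 := by decide
  have n02 : (0 : ZMod 3) ≠ 2 := by decide
  have n12 : (1 : ZMod 3) ≠ 2 := by decide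
  have n10 : (1 : ZMod 3) ≠ 0 := by decide
  have n20 : (2 : ZMod 3) ≠ 0 := by decide
  have n21 : (2 : ZMod 3) ≠ 1 := by decide
  have a01 : (0 : ZMod 3) + 1 = 1 := by decide
  have a12 : (1 : ZMod 3) + 1 = 2 := by decide
  have a20 : (2 : ZMod 3) + 1 = 0 := by decide
  refine ⟨fun k => if k = 0 then x else if k = 1 then y else z, ?_,
          fun k => if k = 0 then e1 else if k = 1 then e2 else e3, ?_, ?_⟩
  · intro a b hab
    rcases key a with rfl | rfl | rfl <;> rcases key b with rfl | rfl | rfl <;>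
      simp_all [n01, n02, n12, n10, n20, n21]
  · intro a b hab
    rcases key a with rfl | rfl | rfl <;> rcases key b with rfl | rfl | rfl <;>
      simp_all [n01, n02, n12, n10, n20, n21]
  · intro i
    rcases key i with rfl | rfl | rfl <;>
      simp [n01, n02, n12, n10, n20, n21, a01, a12, a20, hE1, hE2, hE3,
        m1x, m1y, m2y, m2z, m3z, m3x]
section Structural
variable {N : ℕ} (c : Finset (Fin N) → Bool)

/-- If there is no blue Berge triangle, there is an all-red pair. -/
lemma allRedPair (hN : 5 ≤ N)
    (hb : ¬ BergeCycle N 3 (fun s => s.card = 3 ∧ c s = false)) :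
    ∃ u b : Fin N, u ≠ b ∧ ∀ T : Finset (Fin N), T.card = 3 → u ∈ T → b ∈ T → c T = true := by
  have hins : ∀ T : Finset (Fin N), c T ≠ true → c T = false := by
    intro T h; cases hc : c T; · rfl
    · exact absurd hc h
  by_cases hBlue : ∃ e : Finset (Fin N), e.card = 3 ∧ c e = false
  · obtain ⟨e, he3, hec⟩ := hBlue
    by_cases hMeet : ∃ e' f : Finset (Fin N), (e'.card = 3 ∧ c e' = false) ∧
        (f.card = 3 ∧ c f = false) ∧ e' ≠ f ∧ (e' ∩ f).Nonempty
    · obtain ⟨e', f, ⟨he'3, he'c⟩, ⟨hf3, hfc⟩, hef, z, hz⟩ := hMeet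
      rw [Finset.mem_inter] at hz
      have hx : (e' \ f).Nonempty := by
        rw [Finset.sdiff_nonempty]
        intro hsub
        exact hef (Finset.eq_of_subset_of_card_le hsub (by omega))
      have hy : (f \ e').Nonempty := by
        rw [Finset.sdiff_nonempty]
        intro hsub
        exact hef ((Finset.eq_of_subset_of_card_le hsub (by omega)).symm)
      obtain ⟨x, hxmem⟩ := hx
      obtain ⟨y, hymem⟩ := hy
      rw [Finset.mem_sdiff] at hxmem hymem
      have hxy : x ≠ y := fun h => hxmem.2 (h ▸ hymem.1)
      refine ⟨x, y, hxy, fun T hT3 hxT hyT => ?_⟩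
      by_contra hcT
      have hcT := hins T hcT
      have hzx : z ≠ x := fun h => hxmem.2 (h ▸ hz.2)
      have hzy : z ≠ y := fun h => hymem.2 (h ▸ hz.1)
      have h12 : e' ≠ T := fun h => hymem.2 (h ▸ hyT)
      have h23 : T ≠ f := fun h => hxmem.2 (h ▸ hxT)
      exact hb (mkTriangle _ hzx hxy hzy h12 hef h23
        ⟨he'3, he'c⟩ ⟨hT3, hcT⟩ ⟨hf3, hfc⟩
        hz.1 hxmem.1 hxT hyT hymem.1 hz.2)
    · -- all distinct blue triples are disjoint
      by_cases hTwo : ∃ f : Finset (Fin N), f.card = 3 ∧ c f = false ∧ f ≠ e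
      · obtain ⟨f, hf3, hfc, hfe⟩ := hTwo
        have hdisj : e ∩ f = ∅ := by
          by_contra hne
          exact hMeet ⟨e, f, ⟨he3, hec⟩, ⟨hf3, hfc⟩, hfe.symm,
            Finset.nonempty_iff_ne_empty.mpr hne⟩
        obtain ⟨u, hu⟩ := Finset.card_pos.mp (by omega : 0 < e.card)
        obtain ⟨b, hbm⟩ := Finset.card_pos.mp (by omega : 0 < f.card)
        have hub : u ≠ b := by
          intro h
          have : u ∈ e ∩ f := Finset.mem_inter.mpr ⟨hu, h ▸ hbm⟩
          simp [hdisj] at this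
        refine ⟨u, b, hub, fun T hT3 huT hbT => ?_⟩
        by_contra hcT
        have hcT := hins T hcT
        have hTe : T = e := by
          by_contra hTe
          exact hMeet ⟨T, e, ⟨hT3, hcT⟩, ⟨he3, hec⟩, hTe, ⟨u, Finset.mem_inter.mpr ⟨huT, hu⟩⟩⟩
        have : b ∈ e ∩ f := Finset.mem_inter.mpr ⟨hTe ▸ hbT, hbm⟩
        simp [hdisj] at this
      · -- e is the only blue triple
        push_neg at hTwo
        have : e ≠ Finset.univ := by
          intro h
          rw [h, Finset.card_univ, Fintype.card_fin] at he3; omega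
        have hcompl : (eᶜ : Finset (Fin N)).Nonempty := by
          rw [← Finset.card_pos, Finset.card_compl, he3, Fintype.card_fin]; omega
        obtain ⟨u, hu⟩ := hcompl
        rw [Finset.mem_compl] at hu
        obtain ⟨b, hbm⟩ := Finset.card_pos.mp (by omega : 0 < e.card)
        have hub : u ≠ b := fun h => hu (h ▸ hbm)
        refine ⟨u, b, hub, fun T hT3 huT hbT => ?_⟩
        by_contra hcT
        have := hTwo T hT3 (hins T hcT)
        exact hu (this ▸ huT)
  · have hu : (⟨0, by omega⟩ : Fin N) ≠ ⟨1, by omega⟩ := by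
      simp [Fin.ext_iff]
    refine ⟨_, _, hu, fun T hT3 _ _ => ?_⟩
    by_contra hcT
    exact hBlue ⟨T, hT3, hins T hcT⟩

end Structural
lemma ne_of_mem_not_mem {α : Type*} {s t : Finset α} {a : α}
    (ha : a ∈ s) (hb : a ∉ t) : s ≠ t := fun h => hb (h ▸ ha)

/-- If there is an all-blue pair `{i,j}` and no blue Berge triangle,
then every blue triple contains both `i` and `j`. -/
lemma bookLemma {N : ℕ} (c : Finset (Fin N) → Bool) (hN : 5 ≤ N)
    (hb : ¬ BergeCycle N 3 (fun s => s.card = 3 ∧ c s = false))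
    {i j : Fin N} (hij : i ≠ j)
    (hbook : ∀ z : Fin N, z ≠ i → z ≠ j → c {i, j, z} = false) :
    ∀ T : Finset (Fin N), T.card = 3 → c T = false → i ∈ T ∧ j ∈ T := by
  intro T hT3 hcT
  -- helper: blue book edge data
  have bmem : ∀ z : Fin N, i ∈ ({i, j, z} : Finset (Fin N)) ∧ j ∈ ({i, j, z} : Finset (Fin N))
      ∧ z ∈ ({i, j, z} : Finset (Fin N)) := by
    intro z; refine ⟨?_, ?_, ?_⟩ <;> simp
  have bcard : ∀ z : Fin N, z ≠ i → z ≠ j → ({i, j, z} : Finset (Fin N)).card = 3 :=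
    fun z hzi hzj => card_triple hij (Ne.symm hzi) (Ne.symm hzj)
  obtain ⟨p, q, r, hpq, hpr, hqr, rfl⟩ := Finset.card_eq_three.mp hT3
  by_cases hiT : i ∈ ({p, q, r} : Finset (Fin N)) <;>
    by_cases hjT : j ∈ ({p, q, r} : Finset (Fin N))
  · exact ⟨hiT, hjT⟩
  all_goals exfalso
  -- case i ∈ T, j ∉ T : T = {i,a,b}; triangle (j, a, i) with {i,j,a}, T, {i,j,b}
  · simp only [Finset.mem_insert, Finset.mem_singleton] at hiT hjT
    push_neg at hjT
    obtain ⟨hjp, hjq, hjr⟩ := hjT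
    -- a b : the two elements of T other than i
    obtain ⟨a, b, hab, haT, hbT, hai, hbi⟩ :
        ∃ a b : Fin N, a ≠ b ∧ a ∈ ({p,q,r} : Finset (Fin N)) ∧ b ∈ ({p,q,r} : Finset (Fin N))
          ∧ a ≠ i ∧ b ≠ i := by
      rcases hiT with rfl | rfl | rfl
      · exact ⟨q, r, hqr, by simp, by simp, Ne.symm hpq, Ne.symm hpr⟩
      · exact ⟨p, r, hpr, by simp, by simp, hpq, Ne.symm hqr⟩
      · exact ⟨p, q, hpq, by simp, by simp, hpr, hqr⟩
    have haj : a ≠ j := by rintro rfl; simp at haT; tauto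
    have hbj : b ≠ j := by rintro rfl; simp at hbT; tauto
    have hiT' : i ∈ ({p,q,r} : Finset (Fin N)) := by rcases hiT with rfl|rfl|rfl <;> simp
    refine hb (mkTriangle _ (Ne.symm haj) hai (Ne.symm hij)
      (e1 := {i,j,a}) (e2 := {p,q,r}) (e3 := {i,j,b}) ?_ ?_ ?_
      ⟨bcard a hai haj, hbook a hai haj⟩ ⟨hT3, hcT⟩ ⟨bcard b hbi hbj, hbook b hbi hbj⟩
      (bmem a).2.1 (bmem a).2.2 haT hiT' (bmem b).1 (bmem b).2.1)
    · exact ne_of_mem_not_mem (show j ∈ ({i,j,a} : Finset (Fin N)) by simp)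
        (by simp [hjp, hjq, hjr])
    · exact ne_of_mem_not_mem (show a ∈ ({i,j,a} : Finset (Fin N)) by simp)
        (by simp [hai, haj, hab])
    · exact (ne_of_mem_not_mem (show j ∈ ({i,j,b} : Finset (Fin N)) by simp)
        (by simp [hjp, hjq, hjr])).symm
  · -- i ∉ T, j ∈ T : T = {j,a,b}; triangle (i, a, j) with {i,j,a}, T, {i,j,b}
    simp only [Finset.mem_insert, Finset.mem_singleton] at hiT hjT
    push_neg at hiT
    obtain ⟨hip, hiq, hir⟩ := hiT
    obtain ⟨a, b, hab, haT, hbT, haj, hbj⟩ :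
        ∃ a b : Fin N, a ≠ b ∧ a ∈ ({p,q,r} : Finset (Fin N)) ∧ b ∈ ({p,q,r} : Finset (Fin N))
          ∧ a ≠ j ∧ b ≠ j := by
      rcases hjT with rfl | rfl | rfl
      · exact ⟨q, r, hqr, by simp, by simp, Ne.symm hpq, Ne.symm hpr⟩
      · exact ⟨p, r, hpr, by simp, by simp, hpq, Ne.symm hqr⟩
      · exact ⟨p, q, hpq, by simp, by simp, hpr, hqr⟩
    have hai : a ≠ i := by rintro rfl; simp at haT; tauto
    have hbi : b ≠ i := by rintro rfl; simp at hbT; tauto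
    have hjT' : j ∈ ({p,q,r} : Finset (Fin N)) := by rcases hjT with rfl|rfl|rfl <;> simp
    refine hb (mkTriangle _ (Ne.symm hai) haj hij
      (e1 := {i,j,a}) (e2 := {p,q,r}) (e3 := {i,j,b}) ?_ ?_ ?_
      ⟨bcard a hai haj, hbook a hai haj⟩ ⟨hT3, hcT⟩ ⟨bcard b hbi hbj, hbook b hbi hbj⟩
      (bmem a).1 (bmem a).2.2 haT hjT' (bmem b).2.1 (bmem b).1)
    · exact ne_of_mem_not_mem (show i ∈ ({i,j,a} : Finset (Fin N)) by simp)
        (by simp [hip, hiq, hir])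
    · exact ne_of_mem_not_mem (show a ∈ ({i,j,a} : Finset (Fin N)) by simp)
        (by simp [hai, haj, hab])
    · exact (ne_of_mem_not_mem (show i ∈ ({i,j,b} : Finset (Fin N)) by simp)
        (by simp [hip, hiq, hir])).symm
  · -- i ∉ T, j ∉ T : T = {p,q,r}; triangle (p, q, i) with T, {i,j,q}, {i,j,p}
    simp only [Finset.mem_insert, Finset.mem_singleton] at hiT hjT
    push_neg at hiT hjT
    obtain ⟨hip, hiq, hir⟩ := hiT
    obtain ⟨hjp, hjq, hjr⟩ := hjT
    refine hb (mkTriangle _ hpq (Ne.symm hiq) (Ne.symm hip)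
      (e1 := {p,q,r}) (e2 := {i,j,q}) (e3 := {i,j,p}) ?_ ?_ ?_
      ⟨hT3, hcT⟩ ⟨bcard q (Ne.symm hiq) (Ne.symm hjq), hbook q (Ne.symm hiq) (Ne.symm hjq)⟩
      ⟨bcard p (Ne.symm hip) (Ne.symm hjp), hbook p (Ne.symm hip) (Ne.symm hjp)⟩
      (by simp) (by simp) (bmem q).2.2 (bmem q).1 (bmem p).1 (bmem p).2.2)
    · exact (ne_of_mem_not_mem (show i ∈ ({i,j,q} : Finset (Fin N)) by simp)
        (by simp [hip, hiq, hir])).symm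
    · exact (ne_of_mem_not_mem (show i ∈ ({i,j,p} : Finset (Fin N)) by simp)
        (by simp [hip, hiq, hir])).symm
    · exact ne_of_mem_not_mem (show q ∈ ({i,j,q} : Finset (Fin N)) by simp)
        (by simp [Ne.symm hiq, Ne.symm hjq, Ne.symm hpq])
section MoreHelpers
variable {α : Type*} [DecidableEq α]

lemma triple_congr {x y a b w : α} (h : ({x, y} : Finset α) = ({a, b} : Finset α)) :
    ({x, y, w} : Finset α) = {a, b, w} := by
  have hext := Finset.ext_iff.mp h
  ext e
  simp only [Finset.mem_insert, Finset.mem_singleton] at hext ⊢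
  have := hext e; tauto

lemma pair_from_triples {x y x' y' z : α} (hxz : x ≠ z) (hyz : y ≠ z)
    (hx'z : x' ≠ z) (hy'z : y' ≠ z)
    (h : ({x, y, z} : Finset α) = {x', y', z}) : ({x, y} : Finset α) = {x', y'} := by
  have hext := Finset.ext_iff.mp h
  ext e
  simp only [Finset.mem_insert, Finset.mem_singleton] at hext ⊢
  have := hext e
  constructor
  · rintro (rfl | rfl)
    · rcases this.mp (Or.inl rfl) with h' | h' | h' <;> tauto
    · rcases this.mp (Or.inr (Or.inl rfl)) with h' | h' | h' <;> tauto
  · rintro (rfl | rfl)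
    · rcases this.mpr (Or.inl rfl) with h' | h' | h' <;> tauto
    · rcases this.mpr (Or.inr (Or.inl rfl)) with h' | h' | h' <;> tauto

lemma tri_rot {x y z : α} : ({x, y, z} : Finset α) = {z, x, y} := by
  ext a; simp only [Finset.mem_insert, Finset.mem_singleton]; tauto

lemma pair_exists_not_mem {P Q : Finset α} (h2 : P.card = 2) (h2' : Q.card = 2)
    (hne : P ≠ Q) : ∃ a, a ∈ P ∧ a ∉ Q := by
  by_contra hc
  push_neg at hc
  exact hne (Finset.eq_of_subset_of_card_le hc (by omega))

end MoreHelpers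

lemma pair_eq_idx {N m : ℕ} {v : Fin m → Fin N} (hv : Function.Injective v)
    {s t s' t' : Fin m} (hst : s < t) (hs't' : s' < t')
    (h : ({v s, v t} : Finset (Fin N)) = {v s', v t'}) : s = s' ∧ t = t' := by
  have hne : v s ≠ v t := fun hh => (ne_of_lt hst) (hv hh)
  rcases pair_eq hne h with ⟨h1, h2⟩ | ⟨h1, h2⟩
  · exact ⟨hv h1, hv h2⟩
  · exfalso
    have e1 : s = t' := hv h1
    have e2 : t = s' := hv h2
    rw [e2] at hst
    rw [e1] at hst
    exact absurd (hst.trans hs't') (lt_irrefl _)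
/-- Two distinct pairs, each doubly blue at pages u and b, cannot span a common triple. -/
lemma cross_blue {N : ℕ} (c : Finset (Fin N) → Bool)
    (hb : ¬ BergeCycle N 3 (fun s => s.card = 3 ∧ c s = false))
    {u b : Fin N} (hub : u ≠ b)
    {x y x' y' z z' : Fin N} (hxy : x ≠ y) (hx'y' : x' ≠ y')
    (hu1 : u ∉ ({x, y} : Finset (Fin N))) (hu2 : u ∉ ({x', y'} : Finset (Fin N)))
    (hb1 : b ∉ ({x, y} : Finset (Fin N))) (hb2 : b ∉ ({x', y'} : Finset (Fin N)))
    (hz : z ∉ ({x, y} : Finset (Fin N)))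
    (hz' : z' ∉ ({x', y'} : Finset (Fin N)))
    (c1 : c {x, y, u} = false) (c2 : c {x, y, b} = false)
    (c3 : c {x', y', u} = false) (c4 : c {x', y', b} = false)
    (hne : ({x, y} : Finset (Fin N)) ≠ {x', y'})
    (heq : ({x, y, z} : Finset (Fin N)) = {x', y', z'}) : False := by
  have hc2 : ({x, y} : Finset (Fin N)).card = 2 := Finset.card_pair hxy
  have hc2' : ({x', y'} : Finset (Fin N)).card = 2 := Finset.card_pair hx'y'
  -- z' ∈ {x,y}
  have hz'P : z' ∈ ({x, y} : Finset (Fin N)) := by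
    obtain ⟨p0, hp0P, hp0Q⟩ := pair_exists_not_mem hc2 hc2' hne
    have hp0T : p0 ∈ ({x', y', z'} : Finset (Fin N)) := by
      rw [← heq]
      simp only [Finset.mem_insert, Finset.mem_singleton] at hp0P ⊢
      tauto
    simp only [Finset.mem_insert, Finset.mem_singleton] at hp0T hp0Q
    push_neg at hp0Q
    have : p0 = z' := by tauto
    exact this ▸ hp0P
  -- z ∈ {x',y'}
  have hzQ : z ∈ ({x', y'} : Finset (Fin N)) := by
    obtain ⟨q0, hq0Q, hq0P⟩ := pair_exists_not_mem hc2' hc2 (Ne.symm hne)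
    have hq0T : q0 ∈ ({x, y, z} : Finset (Fin N)) := by
      rw [heq]
      simp only [Finset.mem_insert, Finset.mem_singleton] at hq0Q ⊢
      tauto
    simp only [Finset.mem_insert, Finset.mem_singleton] at hq0T hq0P
    push_neg at hq0P
    have : q0 = z := by tauto
    exact this ▸ hq0Q
  -- σ : the other element of {x,y} besides z'
  obtain ⟨σ, hP⟩ : ∃ σ : Fin N, ({x, y} : Finset (Fin N)) = {z', σ} := by
    simp only [Finset.mem_insert, Finset.mem_singleton] at hz'P
    rcases hz'P with rfl | rfl
    · exact ⟨y, rfl⟩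
    · exact ⟨x, by ext a; simp; tauto⟩
  have hσmem : σ ∈ ({x, y} : Finset (Fin N)) := by rw [hP]; simp
  have hz'σ : z' ≠ σ := by
    intro hh
    rw [hP, ← hh] at hc2; simp at hc2
  have hσT : σ ∈ ({x', y', z'} : Finset (Fin N)) := by
    rw [← heq]
    simp only [Finset.mem_insert, Finset.mem_singleton] at hσmem ⊢
    tauto
  have hσmem' : σ ∈ ({x', y'} : Finset (Fin N)) := by
    simp only [Finset.mem_insert, Finset.mem_singleton] at hσT ⊢
    rcases hσT with h | h | h
    · tauto
    · tauto
    · exact absurd h.symm hz'σ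
  have hzP : z ∉ ({x, y} : Finset (Fin N)) := hz
  have hσz : σ ≠ z := fun hh => hzP (hh ▸ hσmem)
  have hQ : ({x', y'} : Finset (Fin N)) = {σ, z} := by
    refine (Finset.eq_of_subset_of_card_le ?_ ?_).symm
    · intro a ha
      simp only [Finset.mem_insert, Finset.mem_singleton] at ha
      rcases ha with rfl | rfl
      · exact hσmem'
      · exact hzQ
    · rw [hc2', Finset.card_pair hσz]
  -- rewrite colours in terms of z', σ, z
  have c1' : c {z', σ, u} = false := by rw [← triple_congr hP]; exact c1
  have c2' : c {z', σ, b} = false := by rw [← triple_congr hP]; exact c2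
  have c3' : c {σ, z, u} = false := by rw [← triple_congr hQ]; exact c3
  -- atomic inequalities
  have hup0 : u ≠ z' := fun hh => hu1 (hh ▸ hz'P)
  have huσ : u ≠ σ := fun hh => hu1 (hh ▸ hσmem)
  have huq0 : u ≠ z := fun hh => hu2 (hh ▸ hzQ)
  have hbp0 : b ≠ z' := fun hh => hb1 (hh ▸ hz'P)
  have hbσ : b ≠ σ := fun hh => hb1 (hh ▸ hσmem)
  have hbq0 : b ≠ z := fun hh => hb2 (hh ▸ hzQ)
  have hq0p0 : z ≠ z' := fun hh => hzP (hh ▸ hz'P)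
  -- the blue triangle on (z', σ, u)
  refine hb (mkTriangle _ hz'σ (Ne.symm huσ) (Ne.symm hup0)
    (e1 := {z', σ, b}) (e2 := {σ, z, u}) (e3 := {z', σ, u}) ?_ ?_ ?_
    ⟨card_triple hz'σ (Ne.symm hbp0) (Ne.symm hbσ), c2'⟩
    ⟨card_triple hσz (Ne.symm huσ) (Ne.symm huq0), c3'⟩
    ⟨card_triple hz'σ (Ne.symm hup0) (Ne.symm huσ), c1'⟩
    (by simp) (by simp) (by simp) (by simp) (by simp) (by simp))
  · exact ne_of_mem_not_mem (show b ∈ ({z', σ, b} : Finset (Fin N)) by simp)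
      (by simp [hbσ, hbq0, hub.symm])
  · exact ne_of_mem_not_mem (show b ∈ ({z', σ, b} : Finset (Fin N)) by simp)
      (by simp [hbp0, hbσ, hub.symm])
  · exact ne_of_mem_not_mem (show z ∈ ({σ, z, u} : Finset (Fin N)) by simp)
      (by simp [hq0p0, Ne.symm hσz, Ne.symm huq0])
/-- Main construction: all-red pair `{u,b}` plus no all-blue pair gives a red Berge K_m. -/
lemma mainCaseK {m : ℕ} (c : Finset (Fin (m+1)) → Bool)
    (hb : ¬ BergeCycle (m+1) 3 (fun s => s.card = 3 ∧ c s = false))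
    {u b : Fin (m+1)} (hub : u ≠ b)
    (hred : ∀ T : Finset (Fin (m+1)), T.card = 3 → u ∈ T → b ∈ T → c T = true)
    (hnab : ∀ x y : Fin (m+1), x ≠ y → ∃ z, z ≠ x ∧ z ≠ y ∧ c {x, y, z} = true) :
    BergeK (m+1) m (fun s => s.card = 3 ∧ c s = true) := by
  classical
  set v : Fin m → Fin (m+1) := u.succAbove with hvdef
  have hv : Function.Injective v := Fin.succAbove_right_injective
  have hvu : ∀ s, v s ≠ u := fun s => Fin.succAbove_ne u s
  set zf : Fin (m+1) → Fin (m+1) → Fin (m+1) :=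
    fun x y => if h : x ≠ y then (hnab x y h).choose else x with hzfdef
  have zspec : ∀ x y : Fin (m+1), (h : x ≠ y) →
      zf x y ≠ x ∧ zf x y ≠ y ∧ c {x, y, zf x y} = true := by
    intro x y h
    have := (hnab x y h).choose_spec
    simp only [hzfdef, dif_pos h]
    exact this
  -- b is not in a pair whose u-page is blue
  have hbP : ∀ s t : Fin m, s ≠ t → c {v s, v t, u} = false →
      v s ≠ b ∧ v t ≠ b := by
    intro s t hst hc
    have hvs : v s ≠ v t := fun hh => hst (hv hh)
    constructor
    · rintro rfl
      rw [hred _ (card_triple hvs (hvu s) (hvu t)) (by simp) (by simp)] at hc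
      simp at hc
    · rintro rfl
      rw [hred _ (card_triple hvs (hvu s) (hvu t)) (by simp) (by simp)] at hc
      simp at hc
  refine ⟨v, hv, fun s t =>
    if c {v s, v t, u} = true then {v s, v t, u}
    else if c {v s, v t, b} = true then {v s, v t, b}
    else {v s, v t, zf (v s) (v t)}, ?_, ?_⟩
  · intro s t hst
    have hstne : s ≠ t := ne_of_lt hst
    have hvs : v s ≠ v t := fun hh => hstne (hv hh)
    dsimp only
    split_ifs with h1 h2
    · exact ⟨⟨card_triple hvs (hvu s) (hvu t), h1⟩, by simp, by simp⟩
    · have hb' := hbP s t hstne (by simpa using h1)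
      exact ⟨⟨card_triple hvs hb'.1 hb'.2, h2⟩, by simp, by simp⟩
    · have hz := zspec (v s) (v t) hvs
      exact ⟨⟨card_triple hvs (Ne.symm hz.1) (Ne.symm hz.2.1), hz.2.2⟩, by simp, by simp⟩
  · intro s t s' t' hst hs't' heq
    have hstne : s ≠ t := ne_of_lt hst
    have hs't'ne : s' ≠ t' := ne_of_lt hs't'
    have hvs : v s ≠ v t := fun hh => hstne (hv hh)
    have hvs' : v s' ≠ v t' := fun hh => hs't'ne (hv hh)
    have huP : u ∉ ({v s, v t} : Finset (Fin (m+1))) := by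
      simp [Ne.symm (hvu s), Ne.symm (hvu t)]
    have huP' : u ∉ ({v s', v t'} : Finset (Fin (m+1))) := by
      simp [Ne.symm (hvu s'), Ne.symm (hvu t')]
    dsimp only at heq
    by_cases h1 : c {v s, v t, u} = true
    · rw [if_pos h1] at heq
      by_cases h3 : c {v s', v t', u} = true
      · rw [if_pos h3] at heq
        exact pair_eq_idx hv hst hs't'
          (pair_from_triples (hvu s) (hvu t) (hvu s') (hvu t') heq)
      · rw [if_neg h3] at heq
        exfalso
        by_cases h4 : c {v s', v t', b} = true
        · rw [if_pos h4] at heq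
          exact ne_of_mem_not_mem (show u ∈ ({v s, v t, u} : Finset (Fin (m+1))) by simp)
            (by simp [Ne.symm (hvu s'), Ne.symm (hvu t'), hub]) heq
        · rw [if_neg h4] at heq
          have hz := zspec (v s') (v t') hvs'
          have hzu : zf (v s') (v t') ≠ u := by
            intro hh
            rw [hh] at hz
            rw [hz.2.2] at h3
            exact h3 rfl
          exact ne_of_mem_not_mem (show u ∈ ({v s, v t, u} : Finset (Fin (m+1))) by simp)
            (by simp [Ne.symm (hvu s'), Ne.symm (hvu t'), Ne.symm hzu]) heq
    · rw [if_neg h1] at heq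
      have hc1 : c {v s, v t, u} = false := by simpa using h1
      have hbp := hbP s t hstne hc1
      by_cases h2 : c {v s, v t, b} = true
      · rw [if_pos h2] at heq
        by_cases h3 : c {v s', v t', u} = true
        · rw [if_pos h3] at heq
          exfalso
          exact ne_of_mem_not_mem (show u ∈ ({v s', v t', u} : Finset (Fin (m+1))) by simp)
            (by simp [Ne.symm (hvu s), Ne.symm (hvu t), hub]) heq.symm
        · rw [if_neg h3] at heq
          have hc3 : c {v s', v t', u} = false := by simpa using h3
          have hbp' := hbP s' t' hs't'ne hc3
          by_cases h4 : c {v s', v t', b} = true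
          · rw [if_pos h4] at heq
            exact pair_eq_idx hv hst hs't'
              (pair_from_triples hbp.1 hbp.2 hbp'.1 hbp'.2 heq)
          · rw [if_neg h4] at heq
            exfalso
            have hz := zspec (v s') (v t') hvs'
            have hzb : zf (v s') (v t') ≠ b := by
              intro hh
              rw [hh] at hz
              rw [hz.2.2] at h4
              exact h4 rfl
            exact ne_of_mem_not_mem (show b ∈ ({v s, v t, b} : Finset (Fin (m+1))) by simp)
              (by simp [Ne.symm hbp'.1, Ne.symm hbp'.2, Ne.symm hzb]) heq
      · rw [if_neg h2] at heq
        have hc2 : c {v s, v t, b} = false := by simpa using h2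
        have hz := zspec (v s) (v t) hvs
        by_cases h3 : c {v s', v t', u} = true
        · rw [if_pos h3] at heq
          exfalso
          have hzu : zf (v s) (v t) ≠ u := by
            intro hh
            rw [hh] at hz
            rw [hz.2.2] at h1
            exact h1 rfl
          exact ne_of_mem_not_mem (show u ∈ ({v s', v t', u} : Finset (Fin (m+1))) by simp)
            (by simp [Ne.symm (hvu s), Ne.symm (hvu t), Ne.symm hzu]) heq.symm
        · rw [if_neg h3] at heq
          have hc3 : c {v s', v t', u} = false := by simpa using h3
          have hbp' := hbP s' t' hs't'ne hc3
          by_cases h4 : c {v s', v t', b} = true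
          · rw [if_pos h4] at heq
            exfalso
            have hzb : zf (v s) (v t) ≠ b := by
              intro hh
              rw [hh] at hz
              rw [hz.2.2] at h2
              exact h2 rfl
            exact ne_of_mem_not_mem (show b ∈ ({v s', v t', b} : Finset (Fin (m+1))) by simp)
              (by simp [Ne.symm hbp.1, Ne.symm hbp.2, Ne.symm hzb]) heq.symm
          · rw [if_neg h4] at heq
            have hc4 : c {v s', v t', b} = false := by simpa using h4
            by_cases hPQ : ({v s, v t} : Finset (Fin (m+1))) = {v s', v t'}
            · exact pair_eq_idx hv hst hs't' hPQ
            · exfalso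
              have hz' := zspec (v s') (v t') hvs'
              exact cross_blue c hb hub hvs hvs' huP huP'
                (by simp [Ne.symm hbp.1, Ne.symm hbp.2])
                (by simp [Ne.symm hbp'.1, Ne.symm hbp'.2])
                (by simp [hz.1, hz.2.1]) (by simp [hz'.1, hz'.2.1])
                hc1 hc2 hc3 hc4 hPQ heq
/-- Book case: if every triple avoiding `i` or avoiding `j` is red, we get a red Berge K_m. -/
lemma bookCaseK {m : ℕ} (hm : 4 ≤ m) (c : Finset (Fin (m+1)) → Bool)
    {i j : Fin (m+1)} (hij : i ≠ j)
    (hred : ∀ T : Finset (Fin (m+1)), T.card = 3 → (i ∉ T ∨ j ∉ T) → c T = true) :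
    BergeK (m+1) m (fun s => s.card = 3 ∧ c s = true) := by
  classical
  set v : Fin m → Fin (m+1) := j.succAbove with hvdef
  have hv : Function.Injective v := Fin.succAbove_right_injective
  have hvj : ∀ s, v s ≠ j := fun s => Fin.succAbove_ne j s
  obtain ⟨i₀, hi₀⟩ := Fin.exists_succAbove_eq hij
  -- three distinct indices different from i₀
  have hcard : 2 < ((Finset.univ : Finset (Fin m)).erase i₀).card := by
    rw [Finset.card_erase_of_mem (Finset.mem_univ _), Finset.card_univ, Fintype.card_fin]
    omega
  obtain ⟨a₀, b₀, c₀, ha₀, hb₀, hc₀, hab, hac, hbc⟩ := Finset.two_lt_card_iff.mp hcard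
  rw [Finset.mem_erase] at ha₀ hb₀ hc₀
  have hai : a₀ ≠ i₀ := ha₀.1
  have hbi : b₀ ≠ i₀ := hb₀.1
  have hci : c₀ ≠ i₀ := hc₀.1
  set nxt : Fin m → Fin m := fun t => if t = a₀ then b₀ else if t = b₀ then c₀ else a₀
    with hnxtdef
  have nx_ne_i0 : ∀ t, nxt t ≠ i₀ := by
    intro t
    simp only [hnxtdef]
    split_ifs <;> assumption
  have nx_ne : ∀ t, nxt t ≠ t := by
    intro t
    simp only [hnxtdef]
    split_ifs with h1 h2
    · rw [h1]; exact hab.symm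
    · rw [h2]; exact hbc.symm
    · exact fun hh => h1 hh.symm
  have nxa : nxt a₀ = b₀ := by simp [hnxtdef]
  have nxb : nxt b₀ = c₀ := by simp [hnxtdef, Ne.symm hab]
  have nxo : ∀ s, s ≠ a₀ → s ≠ b₀ → nxt s = a₀ := by
    intro s hsa hsb; simp [hnxtdef, hsa, hsb]
  have no2cyc : ∀ s t : Fin m, nxt s = t → nxt t = s → False := by
    intro s t h1 h2
    by_cases hsa : s = a₀
    · subst hsa
      rw [nxa] at h1
      subst h1
      rw [nxb] at h2
      exact hac h2.symm
    · by_cases hsb : s = b₀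
      · subst hsb
        rw [nxb] at h1
        subst h1
        rw [nxo c₀ (Ne.symm hac) (Ne.symm hbc)] at h2
        exact hab h2
      · rw [nxo s hsa hsb] at h1
        subst h1
        rw [nxa] at h2
        exact hsb h2.symm
  -- the hyperedge assignment
  refine ⟨v, hv, fun s t =>
    if s = i₀ then {i, v t, v (nxt t)}
    else if t = i₀ then {i, v s, v (nxt s)}
    else {v s, v t, j}, ?_, ?_⟩
  · intro s t hst
    have hstne : s ≠ t := ne_of_lt hst
    have hvs : v s ≠ v t := fun hh => hstne (hv hh)
    have star_ok : ∀ o : Fin m, o ≠ i₀ →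
        (({i, v o, v (nxt o)} : Finset (Fin (m+1))).card = 3 ∧
          c {i, v o, v (nxt o)} = true) := by
      intro o ho
      have h1 : i ≠ v o := by rw [← hi₀]; exact fun hh => ho (hv hh).symm
      have h2 : i ≠ v (nxt o) := by rw [← hi₀]; exact fun hh => (nx_ne_i0 o) (hv hh).symm
      have h3 : v o ≠ v (nxt o) := fun hh => (nx_ne o) (hv hh).symm
      refine ⟨card_triple h1 h2 h3, hred _ (card_triple h1 h2 h3) (Or.inr ?_)⟩
      simp only [Finset.mem_insert, Finset.mem_singleton]
      push_neg
      exact ⟨hij.symm, Ne.symm (hvj o), Ne.symm (hvj (nxt o))⟩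
    dsimp only
    split_ifs with h1 h2
    · subst h1
      have := star_ok t (Ne.symm hstne)
      exact ⟨⟨this.1, this.2⟩, by rw [← hi₀]; simp [hvdef], by simp⟩
    · subst h2
      have := star_ok s h1
      exact ⟨⟨this.1, this.2⟩, by simp, by rw [← hi₀]; simp [hvdef]⟩
    · have hcard : ({v s, v t, j} : Finset (Fin (m+1))).card = 3 :=
        card_triple hvs (hvj s) (hvj t)
      refine ⟨⟨hcard, hred _ hcard (Or.inl ?_)⟩, by simp, by simp⟩
      rw [← hi₀]
      simp only [Finset.mem_insert, Finset.mem_singleton]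
      push_neg
      exact ⟨fun hh => h1 (hv hh).symm, fun hh => h2 (hv hh).symm, hvj i₀⟩
  · intro s t s' t' hst hs't' heq
    have hstne : s ≠ t := ne_of_lt hst
    have hs't'ne : s' ≠ t' := ne_of_lt hs't'
    have hvs : v s ≠ v t := fun hh => hstne (hv hh)
    have hvs' : v s' ≠ v t' := fun hh => hs't'ne (hv hh)
    -- generic facts
    have hiv : ∀ o : Fin m, o ≠ i₀ → i ≠ v o := by
      intro o ho
      rw [← hi₀]; exact fun hh => ho (hv hh).symm
    have star_eq : ∀ o o' : Fin m, o ≠ i₀ → o' ≠ i₀ →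
        ({i, v o, v (nxt o)} : Finset (Fin (m+1))) = {i, v o', v (nxt o')} → o = o' := by
      intro o o' ho ho' he
      rw [← tri_rot (x := v o) (y := v (nxt o)) (z := i),
          ← tri_rot (x := v o') (y := v (nxt o')) (z := i)] at he
      have hpair := pair_from_triples (Ne.symm (hiv o ho)) (Ne.symm (hiv (nxt o) (nx_ne_i0 o)))
        (Ne.symm (hiv o' ho')) (Ne.symm (hiv (nxt o') (nx_ne_i0 o'))) he
      have hone : v o ≠ v (nxt o) := fun hh => (nx_ne o) (hv hh).symm
      rcases pair_eq hone hpair with ⟨e1, e2⟩ | ⟨e1, e2⟩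
      · exact hv e1
      · exfalso
        exact no2cyc o o' (hv e2) (hv e1).symm
    have star_not_j : ∀ o : Fin m, ∀ x y : Fin m, x ≠ i₀ → y ≠ i₀ →
        ({i, v o, v (nxt o)} : Finset (Fin (m+1))) ≠ {v x, v y, j} := by
      intro o x y hx hy
      refine ne_of_mem_not_mem (show i ∈ ({i, v o, v (nxt o)} : Finset (Fin (m+1))) by simp) ?_
      simp only [Finset.mem_insert, Finset.mem_singleton]
      push_neg
      exact ⟨hiv x hx, hiv y hy, hij⟩
    dsimp only at heq
    by_cases h1 : s = i₀
    · rw [if_pos h1] at heq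
      by_cases h3 : s' = i₀
      · rw [if_pos h3] at heq
        have := star_eq t t' (by rw [h1] at hstne; exact Ne.symm hstne)
          (by rw [h3] at hs't'ne; exact Ne.symm hs't'ne) heq
        exact ⟨h1.trans h3.symm, this⟩
      · rw [if_neg h3] at heq
        by_cases h4 : t' = i₀
        · rw [if_pos h4] at heq
          exfalso
          have := star_eq t s' (by rw [h1] at hstne; exact Ne.symm hstne) h3 heq
          -- s = i₀ = t', t = s' : contradiction with s < t and s' < t'
          rw [this] at hst
          rw [h1, ← h4] at hst
          exact absurd (hs't'.trans hst) (lt_irrefl _)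
        · rw [if_neg h4] at heq
          exact absurd heq (star_not_j t s' t' h3 h4)
    · rw [if_neg h1] at heq
      by_cases h2 : t = i₀
      · rw [if_pos h2] at heq
        by_cases h3 : s' = i₀
        · rw [if_pos h3] at heq
          exfalso
          have := star_eq s t' h1 (by rw [h3] at hs't'ne; exact Ne.symm hs't'ne) heq
          rw [← this] at hs't'
          rw [h3, ← h2] at hs't'
          exact absurd (hst.trans hs't') (lt_irrefl _)
        · rw [if_neg h3] at heq
          by_cases h4 : t' = i₀
          · rw [if_pos h4] at heq
            have := star_eq s s' h1 h3 heq
            exact ⟨this, h2.trans h4.symm⟩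
          · rw [if_neg h4] at heq
            exact absurd heq (star_not_j s s' t' h3 h4)
      · rw [if_neg h2] at heq
        by_cases h3 : s' = i₀
        · rw [if_pos h3] at heq
          exact absurd heq.symm (star_not_j t' s t h1 h2)
        · rw [if_neg h3] at heq
          by_cases h4 : t' = i₀
          · rw [if_pos h4] at heq
            exact absurd heq.symm (star_not_j s' s t h1 h2)
          · rw [if_neg h4] at heq
            exact pair_eq_idx hv hst hs't'
              (pair_from_triples (hvj s) (hvj t) (hvj s') (hvj t') heq)
/-- Upper bound: on m+1 vertices (m ≥ 4), no blue Berge triangle forces a red Berge K_m. -/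
lemma upperK {m : ℕ} (hm : 4 ≤ m) (c : Finset (Fin (m+1)) → Bool)
    (hb : ¬ BergeCycle (m+1) 3 (fun s => s.card = 3 ∧ c s = false)) :
    BergeK (m+1) m (fun s => s.card = 3 ∧ c s = true) := by
  have hN : 5 ≤ m + 1 := by omega
  by_cases hab : ∃ x y : Fin (m+1), x ≠ y ∧ ∀ z, z ≠ x → z ≠ y → c {x, y, z} = false
  · obtain ⟨i, j, hij, hbook⟩ := hab
    have hBL := bookLemma c hN hb hij hbook
    apply bookCaseK hm c hij
    intro T h3 hnm
    by_contra hcT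
    have hcT : c T = false := by simpa using hcT
    rcases hnm with hnm | hnm
    · exact hnm (hBL T h3 hcT).1
    · exact hnm (hBL T h3 hcT).2
  · push_neg at hab
    obtain ⟨u, b, hub, hred⟩ := allRedPair c hN hb
    refine mainCaseK c hb hub hred ?_
    intro x y hxy
    obtain ⟨z, hz1, hz2, hz3⟩ := hab x y hxy
    exact ⟨z, hz1, hz2, by simpa using hz3⟩
/-- Builder for a Berge K₃. -/
lemma mkK3 {N : ℕ} (E : Finset (Fin N) → Prop) {a u b : Fin N}
    (hau : a ≠ u) (hab : a ≠ b) (hub : u ≠ b)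
    {T1 T2 T3 : Finset (Fin N)} (h12 : T1 ≠ T2) (h13 : T1 ≠ T3) (h23 : T2 ≠ T3)
    (hE1 : E T1) (hE2 : E T2) (hE3 : E T3)
    (m1a : a ∈ T1) (m1u : u ∈ T1) (m2a : a ∈ T2) (m2b : b ∈ T2)
    (m3u : u ∈ T3) (m3b : b ∈ T3) : BergeK N 3 E := by
  have key : ∀ k : Fin 3, k = 0 ∨ k = 1 ∨ k = 2 := by decide
  refine ⟨fun k => if k = 0 then a else if k = 1 then u else b, ?_,
    fun s t => if s = 0 then (if t = 1 then T1 else T2) else T3, ?_, ?_⟩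
  · intro x y hxy
    rcases key x with rfl | rfl | rfl <;> rcases key y with rfl | rfl | rfl <;>
      simp_all
  · intro s t hst
    rcases key s with rfl | rfl | rfl <;> rcases key t with rfl | rfl | rfl <;>
      first
        | exact absurd hst (by decide)
        | simp_all [hE1, hE2, hE3]
  · intro s t s' t' hst hs't' heq
    rcases key s with rfl | rfl | rfl <;> rcases key t with rfl | rfl | rfl <;>
      rcases key s' with rfl | rfl | rfl <;> rcases key t' with rfl | rfl | rfl <;>
      first
        | exact absurd hst (by decide)
        | exact absurd hs't' (by decide)
        | simp_all
/-- Upper bound for m = 3: on 5 vertices, no blue Berge triangle forces a red Berge K₃. -/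
lemma upper3 (c : Finset (Fin 5) → Bool)
    (hb : ¬ BergeCycle 5 3 (fun s => s.card = 3 ∧ c s = false)) :
    BergeK 5 3 (fun s => s.card = 3 ∧ c s = true) := by
  classical
  by_cases hab : ∃ x y : Fin 5, x ≠ y ∧ ∀ z, z ≠ x → z ≠ y → c {x, y, z} = false
  · -- book case
    obtain ⟨i, j, hij, hbook⟩ := hab
    have hBL := bookLemma c (by norm_num) hb hij hbook
    have hredBL : ∀ T : Finset (Fin 5), T.card = 3 → j ∉ T → c T = true := by
      intro T h3 hj
      by_contra hcT
      exact hj (hBL T h3 (by simpa using hcT)).2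
    have hcard : 2 < ((Finset.univ : Finset (Fin 5)) \ {i, j}).card := by
      rw [Finset.card_sdiff_of_subset (by intro x _; exact Finset.mem_univ x)]
      rw [Finset.card_univ, Fintype.card_fin]
      have : ({i, j} : Finset (Fin 5)).card = 2 := Finset.card_pair hij
      omega
    obtain ⟨a, b, d, ha, hbm, hd, hab', had, hbd⟩ := Finset.two_lt_card_iff.mp hcard
    rw [Finset.mem_sdiff] at ha hbm hd
    simp only [Finset.mem_insert, Finset.mem_singleton] at ha hbm hd
    push_neg at ha hbm hd
    have hai : a ≠ i := ha.2.1
    have haj : a ≠ j := ha.2.2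
    have hbi : b ≠ i := hbm.2.1
    have hbj : b ≠ j := hbm.2.2
    have hdi : d ≠ i := hd.2.1
    have hdj : d ≠ j := hd.2.2
    -- triples {a,b,i}, {a,d,i}, {b,d,i}
    have c1 : ({a, b, i} : Finset (Fin 5)).card = 3 := card_triple hab' hai hbi
    have c2 : ({a, d, i} : Finset (Fin 5)).card = 3 := card_triple had hai hdi
    have c3 : ({b, d, i} : Finset (Fin 5)).card = 3 := card_triple hbd hbi hdi
    refine mkK3 _ hab' had hbd (T1 := {a, b, i}) (T2 := {a, d, i}) (T3 := {b, d, i})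
      ?_ ?_ ?_
      ⟨c1, hredBL _ c1 (by simp [Ne.symm haj, Ne.symm hbj, Ne.symm hij])⟩
      ⟨c2, hredBL _ c2 (by simp [Ne.symm haj, Ne.symm hdj, Ne.symm hij])⟩
      ⟨c3, hredBL _ c3 (by simp [Ne.symm hbj, Ne.symm hdj, Ne.symm hij])⟩
      (by simp) (by simp) (by simp) (by simp) (by simp) (by simp)
    · exact ne_of_mem_not_mem (show b ∈ ({a,b,i} : Finset (Fin 5)) by simp)
        (by simp [Ne.symm hab', hbd, hbi])
    · exact ne_of_mem_not_mem (show a ∈ ({a,b,i} : Finset (Fin 5)) by simp)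
        (by simp [hab', had, hai])
    · exact ne_of_mem_not_mem (show a ∈ ({a,d,i} : Finset (Fin 5)) by simp)
        (by simp [hab', had, hai])
  · -- no all-blue pair
    push_neg at hab
    have hnab : ∀ x y : Fin 5, x ≠ y → ∃ z, z ≠ x ∧ z ≠ y ∧ c {x, y, z} = true := by
      intro x y hxy
      obtain ⟨z, hz1, hz2, hz3⟩ := hab x y hxy
      exact ⟨z, hz1, hz2, by simpa using hz3⟩
    obtain ⟨u, b, hub, hred⟩ := allRedPair c (by norm_num) hb
    -- pick a ∉ {u, b}
    have hcard : 0 < ((Finset.univ : Finset (Fin 5)) \ {u, b}).card := by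
      rw [Finset.card_sdiff_of_subset (by intro x _; exact Finset.mem_univ x)]
      rw [Finset.card_univ, Fintype.card_fin]
      have : ({u, b} : Finset (Fin 5)).card = 2 := Finset.card_pair hub
      omega
    obtain ⟨a, ham⟩ := Finset.card_pos.mp hcard
    rw [Finset.mem_sdiff] at ham
    simp only [Finset.mem_insert, Finset.mem_singleton] at ham
    push_neg at ham
    have hau : a ≠ u := ham.2.1
    have habn : a ≠ b := ham.2.2
    -- choose c' ∉ {u,b,a} for the third triple, plus a spare
    have hcard2 : 1 < ((Finset.univ : Finset (Fin 5)) \ {u, b, a}).card := by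
      rw [Finset.card_sdiff_of_subset (by intro x _; exact Finset.mem_univ x)]
      rw [Finset.card_univ, Fintype.card_fin]
      have : ({u, b, a} : Finset (Fin 5)).card = 3 :=
        card_triple hub (Ne.symm hau) (Ne.symm habn)
      omega
    obtain ⟨c1, c2, hc1m, hc2m, hc12⟩ := Finset.one_lt_card_iff.mp hcard2
    rw [Finset.mem_sdiff] at hc1m hc2m
    simp only [Finset.mem_insert, Finset.mem_singleton] at hc1m hc2m
    push_neg at hc1m hc2m
    obtain ⟨hc1u, hc1b, hc1a⟩ := hc1m.2
    obtain ⟨hc2u, hc2b, hc2a⟩ := hc2m.2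
    -- third triple T3 = {u, b, c1} is red
    have hT3card : ({u, b, c1} : Finset (Fin 5)).card = 3 :=
      card_triple hub (Ne.symm hc1u) (Ne.symm hc1b)
    have hT3red : c {u, b, c1} = true := hred _ hT3card (by simp) (by simp)
    have haT3 : a ∉ ({u, b, c1} : Finset (Fin 5)) := by simp [hau, habn, Ne.symm hc1a]
    -- red triples on pairs {a,u} and {a,b}
    by_cases hw1 : ∃ w, w ≠ a ∧ w ≠ u ∧ w ≠ b ∧ c {a, u, w} = true
    · obtain ⟨w, hwa, hwu, hwb, hwc⟩ := hw1
      -- T1 = {a,u,w}, T2 = {a,u,b} (red: contains u,b), T3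
      have hT2card : ({a, u, b} : Finset (Fin 5)).card = 3 := card_triple hau habn hub
      have hT2red : c {a, u, b} = true := hred _ hT2card (by simp) (by simp)
      refine mkK3 _ hau habn hub (T1 := {a, u, w}) (T2 := {a, u, b}) (T3 := {u, b, c1})
        ?_ ?_ ?_
        ⟨card_triple hau (Ne.symm hwa) (Ne.symm hwu), hwc⟩ ⟨hT2card, hT2red⟩
        ⟨hT3card, hT3red⟩
        (by simp) (by simp) (by simp) (by simp) (by simp) (by simp)
      · exact ne_of_mem_not_mem (show w ∈ ({a,u,w} : Finset (Fin 5)) by simp)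
          (by simp [hwa, hwu, hwb])
      · exact (ne_of_mem_not_mem (show a ∈ ({a,u,w}:Finset (Fin 5)) by simp) haT3)
      · exact (ne_of_mem_not_mem (show a ∈ ({a,u,b}:Finset (Fin 5)) by simp) haT3)
    · by_cases hw2 : ∃ w, w ≠ a ∧ w ≠ u ∧ w ≠ b ∧ c {a, b, w} = true
      · obtain ⟨w, hwa, hwu, hwb, hwc⟩ := hw2
        have hT1card : ({a, u, b} : Finset (Fin 5)).card = 3 := card_triple hau habn hub
        have hT1red : c {a, u, b} = true := hred _ hT1card (by simp) (by simp)
        refine mkK3 _ hau habn hub (T1 := {a, u, b}) (T2 := {a, b, w}) (T3 := {u, b, c1})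
          ?_ ?_ ?_
          ⟨hT1card, hT1red⟩ ⟨card_triple habn (Ne.symm hwa) (Ne.symm hwb), hwc⟩
          ⟨hT3card, hT3red⟩
          (by simp) (by simp) (by simp) (by simp) (by simp) (by simp)
        · exact ne_of_mem_not_mem (show u ∈ ({a,u,b} : Finset (Fin 5)) by simp)
            (by simp [Ne.symm hau, hub, Ne.symm hwu])
        · exact (ne_of_mem_not_mem (show a ∈ ({a,u,b}:Finset (Fin 5)) by simp) haT3)
        · exact (ne_of_mem_not_mem (show a ∈ ({a,b,w}:Finset (Fin 5)) by simp) haT3)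
      · -- both pairs are fully blue off {a,u,b} : blue triangle
        exfalso
        push_neg at hw1 hw2
        have bl : ∀ w, w ≠ a → w ≠ u → w ≠ b →
            c {a, u, w} = false ∧ c {a, b, w} = false := by
          intro w hwa hwu hwb
          constructor
          · have := hw1 w hwa hwu hwb
            cases hcw : c {a, u, w}
            · rfl
            · exact absurd hcw this
          · have := hw2 w hwa hwu hwb
            cases hcw : c {a, b, w}
            · rfl
            · exact absurd hcw this
        obtain ⟨bl1, bl2⟩ := bl c1 hc1a hc1u hc1b
        obtain ⟨bl3, _⟩ := bl c2 hc2a hc2u hc2b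
        -- triangle (u, c1, a) : e1 = {a,u,c1}, e2 = {a,b,c1}, e3 = {a,u,c2}
        refine hb (mkTriangle _ (Ne.symm hc1u) hc1a hau.symm
          (e1 := {a, u, c1}) (e2 := {a, b, c1}) (e3 := {a, u, c2}) ?_ ?_ ?_
          ⟨card_triple hau (Ne.symm hc1a) (Ne.symm hc1u), bl1⟩
          ⟨card_triple habn (Ne.symm hc1a) (Ne.symm hc1b), bl2⟩
          ⟨card_triple hau (Ne.symm hc2a) (Ne.symm hc2u), bl3⟩
          (by simp) (by simp) (by simp) (by simp) (by simp) (by simp))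
        · exact ne_of_mem_not_mem (show u ∈ ({a,u,c1} : Finset (Fin 5)) by simp)
            (by simp [Ne.symm hau, hub, Ne.symm hc1u])
        · exact ne_of_mem_not_mem (show c1 ∈ ({a,u,c1} : Finset (Fin 5)) by simp)
            (by simp [hc1a, hc1u, hc12])
        · exact ne_of_mem_not_mem (show b ∈ ({a,b,c1} : Finset (Fin 5)) by simp)
            (by simp [Ne.symm habn, hub.symm, Ne.symm hc2b])
section Transfer

lemma transferK {N M m : ℕ} (f : Fin N ↪ Fin M) {P : Finset (Fin N) → Prop}
    {q : Finset (Fin M) → Prop} (himp : ∀ s, P s → q (s.map f))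
    (h : BergeK N m P) : BergeK M m q := by
  obtain ⟨v, hv, h', hcond, hinj⟩ := h
  refine ⟨f ∘ v, f.injective.comp hv, fun i j => (h' i j).map f, ?_, ?_⟩
  · intro i j hij
    obtain ⟨hE, h1, h2⟩ := hcond i j hij
    exact ⟨himp _ hE, Finset.mem_map_of_mem f h1, Finset.mem_map_of_mem f h2⟩
  · intro i j i' j' hij hi'j' heq
    exact hinj i j i' j' hij hi'j' (Finset.map_injective f heq)

lemma transferC {N M n : ℕ} (f : Fin N ↪ Fin M) {P : Finset (Fin N) → Prop}
    {q : Finset (Fin M) → Prop} (himp : ∀ s, P s → q (s.map f))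
    (h : BergeCycle N n P) : BergeCycle M n q := by
  obtain ⟨v, hv, h', hinj, hcond⟩ := h
  refine ⟨f ∘ v, f.injective.comp hv, fun i => (h' i).map f,
    fun i j hij => hinj ((Finset.map_injective f) hij), ?_⟩
  intro i
  obtain ⟨hE, h1, h2⟩ := hcond i
  exact ⟨himp _ hE, Finset.mem_map_of_mem f h1, Finset.mem_map_of_mem f h2⟩

end Transfer

/-- The book colouring (blue = triples containing both z0 and z1) has no blue Berge triangle. -/
lemma noBlueBook {N : ℕ} {z0 z1 : Fin N} (hz : z0 ≠ z1) :
    ¬ BergeCycle N 3 (fun s =>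
      s.card = 3 ∧ (if z0 ∈ s ∧ z1 ∈ s then false else true) = false) := by
  rintro ⟨v, hv, h, hinj, hcond⟩
  have zz : ∀ i : ZMod 3, z0 ∈ h i ∧ z1 ∈ h i := by
    intro i
    obtain ⟨⟨_, hcol⟩, _, _⟩ := hcond i
    by_contra hc
    rw [if_neg hc] at hcol
    simp at hcol
  have struct : ∀ i : ZMod 3, ∃ a, a ≠ z0 ∧ a ≠ z1 ∧ h i = {z0, z1, a} := by
    intro i
    exact triple_structure (hcond i).1.1 (zz i).1 (zz i).2 hz
  choose a ha0 ha1 hstruct using struct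
  have sep : ∀ i j : ZMod 3, i ≠ j → ∀ w, w ∈ h i → w ∈ h j → w = z0 ∨ w = z1 := by
    intro i j hij w hwi hwj
    rw [hstruct i] at hwi
    rw [hstruct j] at hwj
    simp only [Finset.mem_insert, Finset.mem_singleton] at hwi hwj
    rcases hwi with rfl | rfl | rfl
    · exact Or.inl rfl
    · exact Or.inr rfl
    · rcases hwj with h' | h' | h'
      · exact Or.inl h'
      · exact Or.inr h'
      · exfalso
        apply hij
        apply hinj
        rw [hstruct i, hstruct j, h']
  have hvz : ∀ j : ZMod 3, v j = z0 ∨ v j = z1 := by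
    intro j
    have h1 : v j ∈ h (j - 1) := by
      have := (hcond (j - 1)).2.2
      rwa [sub_add_cancel] at this
    have h2 : v j ∈ h j := (hcond j).2.1
    refine sep j (j - 1) ?_ _ h2 h1
    intro hh
    have hcontra : (0 : ZMod 3) = -1 := by
      calc (0 : ZMod 3) = j - j := (sub_self j).symm
        _ = (j - 1) - j := by rw [← hh]
        _ = -1 := by ring
    exact absurd hcontra (by decide)
  rcases hvz 0 with h0 | h0 <;> rcases hvz 1 with h1 | h1 <;> rcases hvz 2 with h2 | h2 <;>
    first
      | exact absurd (hv (h0.trans h1.symm)) (by decide)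
      | exact absurd (hv (h0.trans h2.symm)) (by decide)
      | exact absurd (hv (h1.trans h2.symm)) (by decide)
/-- The book colouring has no red Berge K_m on m vertices. -/
lemma noRedBookK {m : ℕ} {z0 z1 : Fin m} (hz : z0 ≠ z1) :
    ¬ BergeK m m (fun s =>
      s.card = 3 ∧ (if z0 ∈ s ∧ z1 ∈ s then false else true) = true) := by
  rintro ⟨v, hv, h, hcond, hinj⟩
  have hsurj : Function.Surjective v := Finite.injective_iff_surjective.mp hv
  obtain ⟨s, hs⟩ := hsurj z0
  obtain ⟨t, ht⟩ := hsurj z1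
  have hst : s ≠ t := fun hh => hz (by rw [← hs, ← ht, hh])
  rcases lt_or_gt_of_ne hst with hlt | hlt
  · obtain ⟨⟨_, hcol⟩, hm1, hm2⟩ := hcond s t hlt
    rw [if_pos ⟨hs ▸ hm1, ht ▸ hm2⟩] at hcol
    simp at hcol
  · obtain ⟨⟨_, hcol⟩, hm1, hm2⟩ := hcond t s hlt
    rw [if_pos ⟨hs ▸ hm2, ht ▸ hm1⟩] at hcol
    simp at hcol

/-- On 4 vertices there is no red Berge K₃ in the book colouring at {0,1}. -/
lemma noRed34 :
    ¬ BergeK 4 3 (fun s =>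
      s.card = 3 ∧ (if (0 : Fin 4) ∈ s ∧ (1 : Fin 4) ∈ s then false else true) = true) := by
  rintro ⟨v, hv, h, hcond, hinj⟩
  have key : ∀ T : Finset (Fin 4), T.card = 3 →
      (if (0 : Fin 4) ∈ T ∧ (1 : Fin 4) ∈ T then false else true) = true →
      T = {0, 2, 3} ∨ T = {1, 2, 3} := by decide
  have d1 : h 0 1 ≠ h 0 2 := fun he =>
    absurd (hinj 0 1 0 2 (by decide) (by decide) he).2 (by decide)
  have d2 : h 0 1 ≠ h 1 2 := fun he =>
    absurd (hinj 0 1 1 2 (by decide) (by decide) he).1 (by decide)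
  have d3 : h 0 2 ≠ h 1 2 := fun he =>
    absurd (hinj 0 2 1 2 (by decide) (by decide) he).1 (by decide)
  obtain ⟨⟨c1, col1⟩, -, -⟩ := hcond 0 1 (by decide)
  obtain ⟨⟨c2, col2⟩, -, -⟩ := hcond 0 2 (by decide)
  obtain ⟨⟨c3, col3⟩, -, -⟩ := hcond 1 2 (by decide)
  rcases key _ c1 col1 with e1 | e1 <;> rcases key _ c2 col2 with e2 | e2 <;>
    rcases key _ c3 col3 with e3 | e3 <;>
    first
      | exact d1 (e1.trans e2.symm)
      | exact d2 (e1.trans e3.symm)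
      | exact d3 (e2.trans e3.symm)
/-- R(B³K₃, B³C₃) = 5, and R(B³K_m, B³C₃) = m + 1 for m ≥ 4.
Red hyperedges are those with `c s = true`, blue those with `c s = false`. -/
theorem stmt8 :
    IsLeast {N : ℕ | ∀ c : Finset (Fin N) → Bool,
      BergeK N 3 (fun s => s.card = 3 ∧ c s = true) ∨
      BergeCycle N 3 (fun s => s.card = 3 ∧ c s = false)} 5 ∧
    ∀ m : ℕ, 4 ≤ m →
      IsLeast {N : ℕ | ∀ c : Finset (Fin N) → Bool,
        BergeK N m (fun s => s.card = 3 ∧ c s = true) ∨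
        BergeCycle N 3 (fun s => s.card = 3 ∧ c s = false)} (m + 1) := by
  constructor
  · constructor
    · intro c
      rw [or_iff_not_imp_right]
      intro hb
      exact upper3 c hb
    · intro N hN
      by_contra hlt
      push_neg at hlt
      have hN4 : N ≤ 4 := by omega
      set f : Fin N ↪ Fin 4 := Fin.castLEEmb hN4 with hf
      specialize hN (fun T =>
        if (0 : Fin 4) ∈ T.map f ∧ (1 : Fin 4) ∈ T.map f then false else true)
      rcases hN with hK | hC
      · exact noRed34 (transferK f (fun s hs => ⟨by simpa using hs.1, hs.2⟩) hK)
      · exact noBlueBook (show (0 : Fin 4) ≠ 1 by decide)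
          (transferC f (fun s hs => ⟨by simpa using hs.1, hs.2⟩) hC)
  · intro m hm
    constructor
    · intro c
      rw [or_iff_not_imp_right]
      intro hb
      exact upperK hm c hb
    · intro N hN
      by_contra hlt
      push_neg at hlt
      have hNm : N ≤ m := by omega
      set f : Fin N ↪ Fin m := Fin.castLEEmb hNm with hf
      have hz : (⟨0, by omega⟩ : Fin m) ≠ ⟨1, by omega⟩ := by simp [Fin.ext_iff]
      specialize hN (fun T =>
        if (⟨0, by omega⟩ : Fin m) ∈ T.map f ∧ (⟨1, by omega⟩ : Fin m) ∈ T.map f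
        then false else true)
      rcases hN with hK | hC
      · exact noRedBookK hz (transferK f (fun s hs => ⟨by simpa using hs.1, hs.2⟩) hK)
      · exact noBlueBook hz (transferC f (fun s hs => ⟨by simpa using hs.1, hs.2⟩) hC)
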